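/- (Proposition 2, bound form.) Let n, m ≥ 1, let A_0,…,A_m ∈ ℂ^{n×n}, set P(z) = Σ_{j=0}^m A_j z^j and P'(z) = Σ_{j=1}^m j A_j z^{j-1}. Let S_0,…,S_m be ℂ-linear subspaces of ℂ^{n×n}. Let λ₀ ∈ ℂ, let x₀, y₀ ∈ ℂ^n be unit vectors with y₀^H P(λ₀) = 0 and y₀^H P'(λ₀) x₀ ≠ 0. Let ω_0,…,ω_m ≥ 0 and let Δ_j ∈ S_j satisfy ‖Δ_j‖_F ≤ ω_j. Suppose λ : ℝ → ℂ and x : ℝ → ℂ^n are differentiable at 0 with λ(0) = λ₀, x(0) = x₀, and Σ_{j=0}^m (A_j + ε Δ_j) λ(ε)^j x(ε) = 0 for all ε in a neighborhood of 0. Then |λ'(0)| ≤ ( Σ_{j=0}^m ω_j ‖(y₀ x₀^H)|_{S_j}‖_F |λ₀|^j ) / | y₀^H P'(λ₀) x₀ |. -/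

import Mathlib

/-- The Frobenius norm of a complex matrix. -/
noncomputable def frobNorm {n : ℕ} (M : Matrix (Fin n) (Fin n) ℂ) : ℝ :=
  Real.sqrt (∑ i, ∑ j, ‖M i j‖ ^ 2)

/-- The Frobenius inner product of two complex matrices. -/
noncomputable def frobInner {n : ℕ} (A B : Matrix (Fin n) (Fin n) ℂ) : ℂ :=
  ∑ i, ∑ j, (starRingEnd ℂ) (A i j) * B i j


section aux
variable {n : ℕ}

lemma frob_cs (A B : Matrix (Fin n) (Fin n) ℂ) :
    ‖frobInner A B‖ ≤ frobNorm A * frobNorm B := by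
  let a : EuclideanSpace ℂ (Fin n × Fin n) := WithLp.toLp 2 (fun q : Fin n × Fin n => A q.1 q.2)
  let b : EuclideanSpace ℂ (Fin n × Fin n) := WithLp.toLp 2 (fun q : Fin n × Fin n => B q.1 q.2)
  have h1 : frobInner A B = inner ℂ a b := by
    simp [frobInner, PiLp.inner_apply, RCLike.inner_apply, a, b, Fintype.sum_prod_type]
    exact Finset.sum_congr rfl fun i _ => Finset.sum_congr rfl fun j _ => mul_comm _ _
  have h2 : frobNorm A = ‖a‖ := by
    simp [frobNorm, EuclideanSpace.norm_eq, a, Fintype.sum_prod_type]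
  have h3 : frobNorm B = ‖b‖ := by
    simp [frobNorm, EuclideanSpace.norm_eq, b, Fintype.sum_prod_type]
  rw [h1, h2, h3]
  exact norm_inner_le_norm a b

lemma frob_dot (x₀ y₀ : Fin n → ℂ) (M : Matrix (Fin n) (Fin n) ℂ) :
    frobInner (Matrix.vecMulVec y₀ (star x₀)) M
      = dotProduct (star y₀) (Matrix.mulVec M x₀) := by
  simp [frobInner, Matrix.vecMulVec, dotProduct, Matrix.mulVec, Finset.mul_sum,
    mul_comm, mul_left_comm, mul_assoc]

lemma frob_sub (A B C : Matrix (Fin n) (Fin n) ℂ) :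
    frobInner (A - B) C = frobInner A C - frobInner B C := by
  simp [frobInner, sub_mul, Finset.sum_sub_distrib]

lemma dot_sum (y : Fin n → ℂ) (s : Finset ℕ) (f : ℕ → Fin n → ℂ) :
    dotProduct y (∑ j ∈ s, f j) = ∑ j ∈ s, dotProduct y (f j) := by
  simp only [dotProduct, Finset.sum_apply, Finset.mul_sum]
  exact Finset.sum_comm

lemma sum_mulVec (s : Finset ℕ) (M : ℕ → Matrix (Fin n) (Fin n) ℂ) (w : Fin n → ℂ) :
    Matrix.mulVec (∑ j ∈ s, M j) w = ∑ j ∈ s, Matrix.mulVec (M j) w := by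
  induction s using Finset.cons_induction with
  | empty => simp
  | cons a s ha ih => rw [Finset.sum_cons, Finset.sum_cons, Matrix.add_mulVec, ih]

lemma dot_sum_smul (y w : Fin n → ℂ) (s : Finset ℕ) (c : ℕ → ℂ)
    (M : ℕ → Matrix (Fin n) (Fin n) ℂ) :
    dotProduct y (Matrix.mulVec (∑ j ∈ s, c j • M j) w)
      = ∑ j ∈ s, c j * dotProduct y (Matrix.mulVec (M j) w) := by
  rw [sum_mulVec, dot_sum]
  refine Finset.sum_congr rfl fun j _ => ?_
  rw [Matrix.smul_mulVec, dotProduct_smul, smul_eq_mul]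

end aux

/-- Proposition 2, bound form: for a simple eigenvalue `lam₀` of
`P(z) = ∑_{j=0}^m A_j z^j` and structured perturbations `Δ_j ∈ S_j` with
`‖Δ_j‖_F ≤ ω_j`,
`|λ'(0)| ≤ (∑_{j=0}^m ω_j ‖(y₀ x₀ᴴ)|_{S_j}‖_F |lam₀|^j) / |y₀ᴴ P'(lam₀) x₀|`.
Here `p j` is the orthogonal projection of `y₀ x₀ᴴ` onto `S_j` (characterized by
`p j ∈ S_j` and `y₀ x₀ᴴ - p j ⟂ S_j` w.r.t. the Frobenius inner product). -/
theorem statement_10 {n m : ℕ} (hn : 1 ≤ n) (hm : 1 ≤ m)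
    (A : ℕ → Matrix (Fin n) (Fin n) ℂ)
    (S : ℕ → Submodule ℂ (Matrix (Fin n) (Fin n) ℂ))
    (lam₀ lam' : ℂ) (x₀ y₀ : Fin n → ℂ)
    (hx₀ : ∑ i, ‖x₀ i‖ ^ 2 = 1) (hy₀ : ∑ i, ‖y₀ i‖ ^ 2 = 1)
    (hleft : Matrix.vecMul (star y₀) (∑ j ∈ Finset.range (m + 1), lam₀ ^ j • A j) = 0)
    (hsimple : dotProduct (star y₀)
      (Matrix.mulVec (∑ j ∈ Finset.range (m + 1), ((j : ℂ) * lam₀ ^ (j - 1)) • A j) x₀) ≠ 0)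
    (p : ℕ → Matrix (Fin n) (Fin n) ℂ) (hpS : ∀ j, p j ∈ S j)
    (hproj : ∀ j, ∀ Z ∈ S j, frobInner (Matrix.vecMulVec y₀ (star x₀) - p j) Z = 0)
    (ω : ℕ → ℝ) (hω : ∀ j, j ≤ m → 0 ≤ ω j)
    (Δ : ℕ → Matrix (Fin n) (Fin n) ℂ)
    (hΔS : ∀ j, j ≤ m → Δ j ∈ S j)
    (hΔ : ∀ j, j ≤ m → frobNorm (Δ j) ≤ ω j)
    (lam : ℝ → ℂ) (x : ℝ → Fin n → ℂ) (x' : Fin n → ℂ)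
    (hlam : HasDerivAt lam lam' 0) (hx : HasDerivAt x x' 0)
    (hlam0 : lam 0 = lam₀) (hx0 : x 0 = x₀)
    (heq : ∀ᶠ ε in nhds (0 : ℝ), ∑ j ∈ Finset.range (m + 1),
      lam ε ^ j • Matrix.mulVec (A j + (ε : ℂ) • Δ j) (x ε) = 0) :
    ‖lam'‖ ≤
      (∑ j ∈ Finset.range (m + 1), ω j * frobNorm (p j) * ‖lam₀‖ ^ j) /
      ‖dotProduct (star y₀)
        (Matrix.mulVec (∑ j ∈ Finset.range (m + 1), ((j : ℂ) * lam₀ ^ (j - 1)) • A j) x₀)‖ := by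
  -- derivative of each scalar factor
  have hpow : ∀ j : ℕ, HasDerivAt (fun ε => lam ε ^ j) (lam' * ((j : ℂ) * lam₀ ^ (j - 1))) 0 := by
    intro j
    have h := (hasDerivAt_pow j (lam 0)).scomp (0 : ℝ) hlam
    exact h.congr_deriv (by simp [hlam0, smul_eq_mul])
  have hofReal : HasDerivAt (fun ε : ℝ => (ε : ℂ)) 1 0 := by
    exact Complex.ofRealCLM.hasDerivAt.congr_deriv (by simp)
  have hmul : ∀ (M : Matrix (Fin n) (Fin n) ℂ),
      HasDerivAt (fun ε => Matrix.mulVec M (x ε)) (Matrix.mulVec M x') 0 := by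
    intro M
    have hL := (((Matrix.mulVecLin M).toContinuousLinearMap).restrictScalars ℝ).hasFDerivAt (x := x 0)
    have h := hL.comp_hasDerivAt 0 hx
    exact h
  have hterm : ∀ j ∈ Finset.range (m + 1),
      HasDerivAt (fun ε => lam ε ^ j • Matrix.mulVec (A j + (ε : ℂ) • Δ j) (x ε))
        (lam₀ ^ j • (Matrix.mulVec (A j) x' + Matrix.mulVec (Δ j) x₀)
          + (lam' * ((j : ℂ) * lam₀ ^ (j - 1))) • Matrix.mulVec (A j) x₀) 0 := by
    intro j _
    have h2 : HasDerivAt (fun ε : ℝ => (ε : ℂ) • Matrix.mulVec (Δ j) (x ε))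
        (Matrix.mulVec (Δ j) x₀) 0 := by
      exact (hofReal.smul (hmul (Δ j))).congr_deriv (by simp [hx0])
    have hv := (hmul (A j)).add h2
    have h := (hpow j).smul hv
    have hfun : (fun ε : ℝ => lam ε ^ j • Matrix.mulVec (A j + (ε : ℂ) • Δ j) (x ε))
        = fun ε : ℝ => lam ε ^ j •
            (Matrix.mulVec (A j) (x ε) + (ε : ℂ) • Matrix.mulVec (Δ j) (x ε)) := by
      funext ε
      rw [Matrix.add_mulVec, Matrix.smul_mulVec]
    rw [hfun]
    exact h.congr_deriv (by simp [hlam0, hx0])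
  have hG := HasDerivAt.sum hterm
  have h0 : HasDerivAt (fun ε : ℝ => ∑ j ∈ Finset.range (m + 1),
      lam ε ^ j • Matrix.mulVec (A j + (ε : ℂ) • Δ j) (x ε)) 0 0 :=
    (hasDerivAt_const (0 : ℝ) (0 : Fin n → ℂ)).congr_of_eventuallyEq heq
  have hD0 : (∑ j ∈ Finset.range (m + 1),
      (lam₀ ^ j • (Matrix.mulVec (A j) x' + Matrix.mulVec (Δ j) x₀)
        + (lam' * ((j : ℂ) * lam₀ ^ (j - 1))) • Matrix.mulVec (A j) x₀)) = 0 :=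
    hG.unique (by rw [Finset.sum_fn]; exact h0)
  -- take the dot product with star y₀
  set d := dotProduct (star y₀)
      (Matrix.mulVec (∑ j ∈ Finset.range (m + 1), ((j : ℂ) * lam₀ ^ (j - 1)) • A j) x₀) with hd_def
  have hdot : ∑ j ∈ Finset.range (m + 1),
      (lam₀ ^ j * dotProduct (star y₀) (Matrix.mulVec (A j) x')
        + lam₀ ^ j * dotProduct (star y₀) (Matrix.mulVec (Δ j) x₀)
        + lam' * ((j : ℂ) * lam₀ ^ (j - 1))
            * dotProduct (star y₀) (Matrix.mulVec (A j) x₀)) = 0 := by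
    have h := congrArg (dotProduct (star y₀)) hD0
    rw [dot_sum] at h
    simpa [dotProduct_add, dotProduct_smul, smul_eq_mul, mul_add, add_assoc]
      using h
  have hdot1 : ∑ j ∈ Finset.range (m + 1),
      lam₀ ^ j * dotProduct (star y₀) (Matrix.mulVec (A j) x') = 0 := by
    rw [← dot_sum_smul (star y₀) x' _ (fun j => lam₀ ^ j) A, Matrix.dotProduct_mulVec, hleft,
      zero_dotProduct]
  have hdot3 : ∑ j ∈ Finset.range (m + 1),
      lam' * ((j : ℂ) * lam₀ ^ (j - 1))
        * dotProduct (star y₀) (Matrix.mulVec (A j) x₀) = lam' * d := by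
    rw [hd_def, dot_sum_smul (star y₀) x₀ _ (fun j => (j : ℂ) * lam₀ ^ (j - 1)) A,
      Finset.mul_sum]
    exact Finset.sum_congr rfl fun j _ => by ring
  have hkey : lam' * d
      = -∑ j ∈ Finset.range (m + 1),
          lam₀ ^ j * dotProduct (star y₀) (Matrix.mulVec (Δ j) x₀) := by
    have := hdot
    rw [Finset.sum_add_distrib, Finset.sum_add_distrib, hdot1, hdot3, zero_add] at this
    linear_combination this
  -- final estimate
  have hdpos : 0 < ‖d‖ := by
    simpa using norm_pos_iff.mpr hsimple
  rw [le_div_iff₀ hdpos]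
  have habs : ‖lam'‖ * ‖d‖ = ‖
      (∑ j ∈ Finset.range (m + 1),
        lam₀ ^ j * dotProduct (star y₀) (Matrix.mulVec (Δ j) x₀))‖ := by
    rw [← norm_mul, hkey, norm_neg]
  rw [habs]
  refine le_trans (norm_sum_le _ _) (Finset.sum_le_sum ?_)
  intro j hjmem
  have hj : j ≤ m := Nat.lt_succ_iff.mp (Finset.mem_range.mp hjmem)
  have e1 : dotProduct (star y₀) (Matrix.mulVec (Δ j) x₀) = frobInner (p j) (Δ j) := by
    have h1 := hproj j (Δ j) (hΔS j hj)
    rw [frob_sub] at h1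
    rw [← frob_dot x₀ y₀ (Δ j)]
    linear_combination h1
  rw [norm_mul, norm_pow, e1]
  have hb1 : ‖frobInner (p j) (Δ j)‖ ≤ frobNorm (p j) * ω j :=
    le_trans (frob_cs _ _)
      (mul_le_mul_of_nonneg_left (hΔ j hj) (Real.sqrt_nonneg _))
  have hb2 : (0 : ℝ) ≤ ‖lam₀‖ ^ j := pow_nonneg (norm_nonneg _) _
  calc ‖lam₀‖ ^ j * ‖frobInner (p j) (Δ j)‖
      ≤ ‖lam₀‖ ^ j * (frobNorm (p j) * ω j) :=
        mul_le_mul_of_nonneg_left hb1 hb2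
    _ = ω j * frobNorm (p j) * ‖lam₀‖ ^ j := by ring
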